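/- Let μ̃ be locally consistent pseudo-marginals on a tree G over sets X̄ᵢ: μ̃ᵢⱼ ≥ 0, Σ_{uⱼ} μ̃ᵢⱼ(uᵢ,uⱼ) = μ̃ᵢ(uᵢ) and Σ_{uᵢ} μ̃ᵢⱼ(uᵢ,uⱼ) = μ̃ⱼ(uⱼ) for all edges, with all singleton marginals strictly positive. Root the tree at r and define p(u) = μ̃_r(u_r) · Π_{i≠r} μ̃_{i,pa(i)}(uᵢ,u_{pa(i)}) / μ̃_{pa(i)}(u_{pa(i)}) for u ∈ Π X̄ᵢ. Then Σ_{u∈ΠX̄ᵢ} p(u) = Σ_{u_r∈X̄_r} μ̃_r(u_r), i.e., p sums to the partition function Z(μ̃). -/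

import Mathlib

open Finset


lemma marg_aux {n : ℕ} {X : Fin n → Type*} [∀ i, Fintype (X i)] [∀ i, Nonempty (X i)]
    [∀ i, DecidableEq (X i)] (i j : Fin n) (hij : j ≠ i)
    (F : (∀ k, X k) → ℝ) (hF : ∀ u x, F (Function.update u i x) = F u)
    (G : X i → X j → ℝ) (hG : ∀ y, ∑ x, G x y = 1) :
    (Fintype.card (X i) : ℝ) * (∑ u, F u * G (u i) (u j)) = ∑ u, F u := by
  classical
  set e := Equiv.piSplitAt i X with he
  obtain ⟨x0⟩ := (inferInstance : Nonempty (X i))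
  have hupd : ∀ (x : X i) (v : ∀ a : {a // a ≠ i}, X a),
      e.symm (x, v) = Function.update (e.symm (x0, v)) i x := by
    intro x v
    funext a
    by_cases h : a = i
    · subst h; simp [he]
    · simp [he, Function.update_of_ne h, Equiv.piSplitAt_symm_apply, h]
  have hFe : ∀ (x : X i) (v : ∀ a : {a // a ≠ i}, X a),
      F (e.symm (x, v)) = F (e.symm (x0, v)) := by
    intro x v; rw [hupd x v, hF]
  have hcoordi : ∀ (x : X i) (v : ∀ a : {a // a ≠ i}, X a), (e.symm (x, v)) i = x := by
    intro x v; simp [he]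
  have hcoordj : ∀ (x : X i) (v : ∀ a : {a // a ≠ i}, X a),
      (e.symm (x, v)) j = v ⟨j, hij⟩ := by
    intro x v; simp [he, Equiv.piSplitAt_symm_apply, hij]
  rw [← Equiv.sum_comp e.symm (fun u => F u * G (u i) (u j)),
    ← Equiv.sum_comp e.symm F]
  rw [Fintype.sum_prod_type, Fintype.sum_prod_type]
  simp only [hcoordi, hcoordj]
  rw [Finset.sum_comm]
  calc (Fintype.card (X i) : ℝ) * ∑ v, ∑ x, F (e.symm (x, v)) * G x (v ⟨j, hij⟩)
      = (Fintype.card (X i) : ℝ) * ∑ v, F (e.symm (x0, v)) := by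
        congr 1
        refine Finset.sum_congr rfl fun v _ => ?_
        simp only [hFe]
        rw [← Finset.mul_sum, hG, mul_one]
    _ = ∑ x : X i, ∑ v, F (e.symm (x0, v)) := by
        rw [Finset.sum_const, nsmul_eq_mul, Finset.card_univ]
    _ = ∑ x : X i, ∑ v, F (e.symm (x, v)) := by
        refine Finset.sum_congr rfl fun x _ => Finset.sum_congr rfl fun v _ => (hFe x v).symm

lemma base_aux {n : ℕ} {X : Fin n → Type*} [∀ i, Fintype (X i)] [∀ i, Nonempty (X i)]
    [∀ i, DecidableEq (X i)] (r : Fin n) (f : X r → ℝ) :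
    ∑ u : ∀ i, X i, f (u r)
      = (∏ i ∈ Finset.univ.erase r, (Fintype.card (X i) : ℝ)) * ∑ x, f x := by
  classical
  set e := Equiv.piSplitAt r X with he
  rw [← Equiv.sum_comp e.symm (fun u => f (u r))]
  have hcoord : ∀ p : X r × (∀ a : {a // a ≠ r}, X a), (e.symm p) r = p.1 := by
    intro p; simp [he]
  simp only [hcoord]
  rw [Fintype.sum_prod_type]
  have hcard : (Fintype.card (∀ a : {a // a ≠ r}, X a) : ℝ)
      = ∏ i ∈ Finset.univ.erase r, (Fintype.card (X i) : ℝ) := by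
    rw [Fintype.card_pi]
    push_cast
    exact (Finset.prod_subtype (Finset.univ.erase r)
      (fun x => by simp [Finset.mem_erase]) (fun i => (Fintype.card (X i) : ℝ))).symm
  calc ∑ x : X r, ∑ _v : ∀ a : {a // a ≠ r}, X a, f x
      = ∑ x : X r, (Fintype.card (∀ a : {a // a ≠ r}, X a) : ℝ) * f x := by
        refine Finset.sum_congr rfl fun x _ => ?_
        rw [Finset.sum_const, nsmul_eq_mul, Finset.card_univ]
    _ = _ := by rw [← Finset.mul_sum, hcard]

/-- The tree-reparameterized product of locally consistent strictly positive
pseudo-marginals sums to the partition function `Z(μ̃) = Σ_{u_r} μ̃_r(u_r)`.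
The rooted tree is encoded by a parent map `pa` compatible with a topological
order (`pa i < i` for `i ≠ r`). -/
theorem stmt11 {n : ℕ} {X : Fin n → Type*} [∀ i, Fintype (X i)] [∀ i, Nonempty (X i)]
    [∀ i, DecidableEq (X i)]
    (r : Fin n) (pa : Fin n → Fin n) (hpa : ∀ i, i ≠ r → pa i < i)
    (μs : ∀ i, X i → ℝ) (μe : ∀ i, X i → X (pa i) → ℝ)
    (hμe0 : ∀ i ui uj, 0 ≤ μe i ui uj) (hμs0 : ∀ i ui, 0 < μs i ui)
    (hcons1 : ∀ i, i ≠ r → ∀ ui, ∑ uj, μe i ui uj = μs i ui)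
    (hcons2 : ∀ i, i ≠ r → ∀ uj, ∑ ui, μe i ui uj = μs (pa i) uj) :
    ∑ u : ∀ i, X i,
        μs r (u r) * ∏ i ∈ Finset.univ.erase r, μe i (u i) (u (pa i)) / μs (pa i) (u (pa i))
      = ∑ ur, μs r ur := by
  classical
  set A := Finset.univ.erase r with hA
  have key : ∀ k : ℕ,
      ∑ u : ∀ i, X i, μs r (u r) *
          ∏ i ∈ A.filter (fun i : Fin n => (i : ℕ) < k),
            μe i (u i) (u (pa i)) / μs (pa i) (u (pa i))
        = (∏ i ∈ A.filter (fun i : Fin n => k ≤ (i : ℕ)),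
            (Fintype.card (X i) : ℝ)) * ∑ ur, μs r ur := by
    intro k
    induction k with
    | zero =>
      have h1 : A.filter (fun i : Fin n => (i : ℕ) < 0) = ∅ := by
        apply Finset.filter_false_of_mem; intro i _; omega
      have h2 : A.filter (fun i : Fin n => 0 ≤ (i : ℕ)) = A := by
        apply Finset.filter_true_of_mem; intro i _; omega
      rw [h1, h2]
      simpa using base_aux r (μs r)
    | succ k ih =>
      by_cases hk : k < n
      · set ik : Fin n := ⟨k, hk⟩ with hik
        by_cases hr : ik = r
        · have h1 : A.filter (fun i : Fin n => (i : ℕ) < k + 1) = A.filter (fun i : Fin n => (i : ℕ) < k) := by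
            apply Finset.filter_congr; intro i hi
            have hir : i ≠ r := (Finset.mem_erase.mp hi).1
            have hne : (i : ℕ) ≠ k := by
              intro h; exact hir (by rw [← hr]; exact Fin.ext h)
            constructor <;> intro <;> omega
          have h2 : A.filter (fun i : Fin n => k ≤ (i : ℕ)) = A.filter (fun i : Fin n => k + 1 ≤ (i : ℕ)) := by
            apply Finset.filter_congr; intro i hi
            have hir : i ≠ r := (Finset.mem_erase.mp hi).1
            have hne : (i : ℕ) ≠ k := by
              intro h; exact hir (by rw [← hr]; exact Fin.ext h)
            constructor <;> intro <;> omega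
          rw [h1, ← h2]; exact ih
        · have hikr : ik ≠ r := hr
          have hpalt : pa ik < ik := hpa ik hikr
          have hpane : pa ik ≠ ik := ne_of_lt hpalt
          have hact : A.filter (fun i : Fin n => (i : ℕ) < k + 1)
              = insert ik (A.filter (fun i : Fin n => (i : ℕ) < k)) := by
            ext i
            simp only [Finset.mem_filter, Finset.mem_insert, hA, Finset.mem_erase,
              Finset.mem_univ, and_true]
            constructor
            · rintro ⟨hir, hlt'⟩
              rcases Nat.lt_succ_iff_lt_or_eq.mp hlt' with h | h
              · exact Or.inr ⟨hir, h⟩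
              · exact Or.inl (Fin.ext h)
            · rintro (rfl | ⟨hir, hlt'⟩)
              · exact ⟨hikr, Nat.lt_succ_self k⟩
              · exact ⟨hir, Nat.lt_succ_of_lt hlt'⟩
          have hnm1 : ik ∉ A.filter (fun i : Fin n => (i : ℕ) < k) := by
            simp [Finset.mem_filter, hik]
          have hpad : A.filter (fun i : Fin n => k ≤ (i : ℕ))
              = insert ik (A.filter (fun i : Fin n => k + 1 ≤ (i : ℕ))) := by
            ext i
            simp only [Finset.mem_filter, Finset.mem_insert, hA, Finset.mem_erase,
              Finset.mem_univ, and_true]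
            constructor
            · rintro ⟨hir, hge⟩
              rcases Nat.eq_or_lt_of_le hge with h | h
              · exact Or.inl (Fin.ext h.symm)
              · exact Or.inr ⟨hir, h⟩
            · rintro (rfl | ⟨hir, hge⟩)
              · exact ⟨hikr, le_refl k⟩
              · exact ⟨hir, Nat.le_of_succ_le hge⟩
          have hnm2 : ik ∉ A.filter (fun i : Fin n => k + 1 ≤ (i : ℕ)) := by
            simp [Finset.mem_filter, hik]
          set F : (∀ i, X i) → ℝ := fun u => μs r (u r) *
            ∏ i ∈ A.filter (fun i : Fin n => (i : ℕ) < k),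
              μe i (u i) (u (pa i)) / μs (pa i) (u (pa i)) with hFdef
          set G : X ik → X (pa ik) → ℝ := fun x y => μe ik x y / μs (pa ik) y with hGdef
          have hF : ∀ u x, F (Function.update u ik x) = F u := by
            intro u x
            refine congrArg₂ (· * ·) ?_ ?_
            · rw [Function.update_of_ne hikr.symm]
            · refine Finset.prod_congr rfl fun i hi => ?_
              obtain ⟨hiA, hilt⟩ := Finset.mem_filter.mp hi
              have hir : i ≠ r := (Finset.mem_erase.mp hiA).1
              have hine : i ≠ ik := Fin.ne_of_val_ne (Nat.ne_of_lt hilt)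
              have hpaine : pa i ≠ ik := by
                have h1 : pa i < i := hpa i hir
                exact Fin.ne_of_val_ne (Nat.ne_of_lt (lt_trans h1 hilt))
              rw [Function.update_of_ne hine, Function.update_of_ne hpaine]
          have hG : ∀ y, ∑ x, G x y = 1 := by
            intro y
            rw [hGdef]
            simp only
            rw [← Finset.sum_div, hcons2 ik hikr y, div_self (ne_of_gt (hμs0 _ y))]
          have hm := marg_aux ik (pa ik) hpane F hF G hG
          have hL : ∑ u : ∀ i, X i, μs r (u r) *
              ∏ i ∈ A.filter (fun i : Fin n => (i : ℕ) < k + 1),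
                μe i (u i) (u (pa i)) / μs (pa i) (u (pa i))
              = ∑ u, F u * G (u ik) (u (pa ik)) := by
            refine Finset.sum_congr rfl fun u _ => ?_
            rw [hact, Finset.prod_insert hnm1]
            ring
          have hcard0 : (Fintype.card (X ik) : ℝ) ≠ 0 :=
            Nat.cast_ne_zero.mpr Fintype.card_ne_zero
          rw [hL]
          apply mul_left_cancel₀ hcard0
          rw [hm, ih, hpad, Finset.prod_insert hnm2, mul_assoc]
      · have h1 : A.filter (fun i : Fin n => (i : ℕ) < k + 1) = A.filter (fun i : Fin n => (i : ℕ) < k) := by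
          apply Finset.filter_congr; intro i _
          have := i.isLt
          constructor <;> intro <;> omega
        have h2 : A.filter (fun i : Fin n => k ≤ (i : ℕ)) = A.filter (fun i : Fin n => k + 1 ≤ (i : ℕ)) := by
          apply Finset.filter_congr; intro i _
          have := i.isLt
          constructor <;> intro <;> omega
        rw [h1, ← h2]; exact ih
  have hfin := key n
  have h1 : A.filter (fun i : Fin n => (i : ℕ) < n) = A :=
    Finset.filter_true_of_mem (fun i _ => i.isLt)
  have h2 : A.filter (fun i : Fin n => n ≤ (i : ℕ)) = ∅ := by
    apply Finset.filter_false_of_mem; intro i _; have := i.isLt; omega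
  rw [h1, h2, Finset.prod_empty, one_mul] at hfin
  exact hfin
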